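/- Let P : C^op → InfSl be a lex primary doctrine and P^∃ its full existential completion. For every product projection π : A × B → A, the reindexing map P^∃_π : P^∃(A) → P^∃(A×B) has a left adjoint ∃_π given by post-composition: ∃_π(f : C → A×B, α) = (π ∘ f : C → A, α); i.e., ∃_π(x) ≤ y iff x ≤ P^∃_π(y) for all x ∈ P^∃(A×B), y ∈ P^∃(A). -/

import Mathlib

open CategoryTheory CategoryTheory.Limits

universe w v u

structure Doctrine (C : Type u) [Category.{v} C] where
  P : C → Type w
  [instOrd : ∀ A, SemilatticeInf (P A)]
  [instTop : ∀ A, OrderTop (P A)]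
  map : ∀ {A B : C}, (A ⟶ B) → P B → P A
  map_id : ∀ (A : C) (x : P A), map (𝟙 A) x = x
  map_comp : ∀ {A B D : C} (f : A ⟶ B) (g : B ⟶ D) (x : P D),
      map (f ≫ g) x = map f (map g x)
  map_mono : ∀ {A B : C} (f : A ⟶ B), Monotone (map f)
  map_top : ∀ {A B : C} (f : A ⟶ B), map f (⊤ : P B) = ⊤
  map_inf : ∀ {A B : C} (f : A ⟶ B) (x y : P B), map f (x ⊓ y) = map f x ⊓ map f y

attribute [instance] Doctrine.instOrd Doctrine.instTop

variable {C : Type u} [Category.{v} C]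

structure Pt (P : Doctrine.{w} C) where
  base : C
  pred : P.P base

structure PtHom (P : Doctrine.{w} C) (X Y : Pt P) where
  hom : X.base ⟶ Y.base
  cond : X.pred ≤ P.map hom Y.pred

theorem PtHom.ext' {P : Doctrine.{w} C} {X Y : Pt P} {f g : PtHom P X Y}
    (h : f.hom = g.hom) : f = g := by
  cases f; cases g; cases h; rfl

instance Pt.categoryStruct (P : Doctrine.{w} C) : CategoryStruct (Pt P) where
  Hom X Y := PtHom P X Y
  id X := ⟨𝟙 X.base, by rw [P.map_id]⟩
  comp f g := ⟨f.hom ≫ g.hom, by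
    rw [P.map_comp]; exact le_trans f.cond (P.map_mono f.hom g.cond)⟩

@[simp] theorem Pt.comp_hom {P : Doctrine.{w} C} {X Y Z : Pt P} (f : X ⟶ Y) (g : Y ⟶ Z) :
    (f ≫ g).hom = f.hom ≫ g.hom := rfl

@[simp] theorem Pt.id_hom {P : Doctrine.{w} C} (X : Pt P) : (𝟙 X : X ⟶ X).hom = 𝟙 X.base := rfl

instance Pt.category (P : Doctrine.{w} C) : Category (Pt P) where
  id_comp f := PtHom.ext' (by simp)
  comp_id f := PtHom.ext' (by simp)
  assoc f g h := PtHom.ext' (by simp)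

structure ExEl (P : Doctrine.{w} C) (A : C) where
  dom : C
  arr : dom ⟶ A
  pred : P.P dom

def ExLe (P : Doctrine.{w} C) {A : C} (x y : ExEl P A) : Prop :=
  ∃ h : x.dom ⟶ y.dom, x.arr = h ≫ y.arr ∧ x.pred ≤ P.map h y.pred

def ExEl.top (P : Doctrine.{w} C) (A : C) : ExEl P A := ⟨A, 𝟙 A, ⊤⟩

def ExEl.push {P : Doctrine.{w} C} {A B : C} (x : ExEl P A) (w : A ⟶ B) : ExEl P B :=
  ⟨x.dom, x.arr ≫ w, x.pred⟩

noncomputable def ExEl.meet [HasPullbacks C] {P : Doctrine.{w} C} {A : C} (x y : ExEl P A) : ExEl P A :=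
  ⟨pullback x.arr y.arr, pullback.fst x.arr y.arr ≫ x.arr,
    P.map (pullback.fst x.arr y.arr) x.pred ⊓ P.map (pullback.snd x.arr y.arr) y.pred⟩

noncomputable def Doctrine.reind [HasPullbacks C] (P : Doctrine.{w} C) {A A' : C} (u : A' ⟶ A)
    (y : ExEl P A) : ExEl P A' :=
  ⟨pullback u y.arr, pullback.fst u y.arr, P.map (pullback.snd u y.arr) y.pred⟩

/-- in the full existential completion `P^∃`, reindexing along a product
projection `π : A ⨯ B ⟶ A` (computed by pullback, `Doctrine.reind`) has a left adjoint
given by post-composition (`ExEl.push`): `∃_π(x) ≤ y ↔ x ≤ P^∃_π(y)`. -/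
theorem fullExCompletion_exists_adjoint [HasFiniteLimits C]
    (P : Doctrine.{w} C) (A B : C) (x : ExEl P (A ⨯ B)) (y : ExEl P A) :
    ExLe P (x.push (prod.fst : A ⨯ B ⟶ A)) y ↔
      ExLe P x (P.reind (prod.fst : A ⨯ B ⟶ A) y) := by
  constructor
  · rintro ⟨(h : x.dom ⟶ y.dom), (hc : x.arr ≫ prod.fst = h ≫ y.arr), (hp : x.pred ≤ P.map h y.pred)⟩
    show ∃ k : x.dom ⟶ pullback (prod.fst : A ⨯ B ⟶ A) y.arr, x.arr = k ≫ pullback.fst _ _ ∧ x.pred ≤ P.map k (P.map (pullback.snd _ _) y.pred)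
    refine ⟨pullback.lift x.arr h hc, (pullback.lift_fst _ _ _).symm, ?_⟩
    have : P.map (pullback.lift x.arr h hc) ((P.reind (prod.fst : A ⨯ B ⟶ A) y).pred)
        = P.map h y.pred := by
      simp [Doctrine.reind, ← P.map_comp]
      exact congrArg (P.map · y.pred) (pullback.lift_snd _ _ _)
    erw [this]; exact hp
  · rintro ⟨(k : x.dom ⟶ pullback (prod.fst : A ⨯ B ⟶ A) y.arr), (hc : x.arr = k ≫ pullback.fst _ _), (hp : x.pred ≤ P.map k (P.map (pullback.snd _ _) y.pred))⟩
    show ∃ h : x.dom ⟶ y.dom, x.arr ≫ prod.fst = h ≫ y.arr ∧ x.pred ≤ P.map h y.pred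
    refine ⟨(k ≫ pullback.snd _ _ : x.dom ⟶ y.dom), ?_, ?_⟩
    · show x.arr ≫ prod.fst = _
      rw [hc, Category.assoc, Category.assoc]
      exact congrArg (k ≫ ·) pullback.condition
    · rw [P.map_comp]; exact hp
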